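/- Let S, S′, S″ be topological spaces with S locally path-connected, S′ nonempty, and S″ connected and locally path-connected. Let f : S′ → S and g : S″ → S be surjective covering maps, and let φ : S′ → S″ be a continuous map satisfying g ∘ φ = f. Then φ is a surjective covering map. -/

import Mathlib

open Set Topology

private lemma covering_factor_key
    {S S' S'' : Type*} [TopologicalSpace S] [TopologicalSpace S'] [TopologicalSpace S'']
    [LocallyPathConnectedSpace S]
    (f : S' → S) (g : S'' → S) (φ : S' → S'')
    (hf : IsCoveringMap f) (hfsurj : Function.Surjective f) (hg : IsCoveringMap g)
    (hφ : Continuous φ) (hcomm : g ∘ φ = f) (y : S'') :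
    ∃ V : Set S'', IsOpen V ∧ y ∈ V ∧
      ((∃ x, φ x ∈ V) → V ⊆ Set.range φ) ∧
      (∀ x₀ : S', φ x₀ = y → IsEvenlyCovered φ y (φ ⁻¹' {y})) := by
  have hgφ : ∀ x, g (φ x) = f x := fun x => congrFun hcomm x
  set b := g y with hb
  haveI hFfd : DiscreteTopology (f ⁻¹' {b}) := (hf b).1
  haveI hFgd : DiscreteTopology (g ⁻¹' {b}) := (hg b).1
  haveI : Nonempty (f ⁻¹' {b}) := let ⟨x, hx⟩ := hfsurj b; ⟨⟨x, hx⟩⟩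
  haveI : Nonempty (g ⁻¹' {b}) := ⟨⟨y, rfl⟩⟩
  obtain ⟨ef, hbf⟩ : ∃ e : Bundle.Trivialization (f ⁻¹' {b}) f, b ∈ e.baseSet :=
    ⟨(hf b).toTrivialization, (hf b).mem_toTrivialization_baseSet⟩
  obtain ⟨eg, hbg⟩ : ∃ e : Bundle.Trivialization (g ⁻¹' {b}) g, b ∈ e.baseSet :=
    ⟨(hg b).toTrivialization, (hg b).mem_toTrivialization_baseSet⟩
  -- the path-connected neighborhood U of b
  set U : Set S := pathComponentIn (ef.baseSet ∩ eg.baseSet) b with hUdef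
  have hUopen : IsOpen U := (ef.open_baseSet.inter eg.open_baseSet).pathComponentIn b
  have hbU : b ∈ U := mem_pathComponentIn_self (Set.mem_inter hbf hbg)
  have hUconn : IsPreconnected U :=
    (isPathConnected_pathComponentIn (Set.mem_inter hbf hbg)).isConnected.isPreconnected
  have hUf : U ⊆ ef.baseSet := fun u hu => (pathComponentIn_subset hu).1
  have hUg : U ⊆ eg.baseSet := fun u hu => (pathComponentIn_subset hu).2
  -- the sheet V of g over U containing y
  set i₀ : g ⁻¹' {b} := (eg y).2 with hi₀
  have hysrc : y ∈ eg.source := eg.mem_source.2 hbg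
  set V : Set S'' := eg.source ∩ (eg ⁻¹' (U ×ˢ ({i₀} : Set (g ⁻¹' {b})))) with hVdef
  have hVopen : IsOpen V :=
    eg.toOpenPartialHomeomorph.continuousOn.isOpen_inter_preimage eg.open_source
      (hUopen.prod (isOpen_discrete _))
  have hyV : y ∈ V := ⟨hysrc, ⟨by rw [eg.coe_fst hysrc]; exact hbU, rfl⟩⟩
  have hgV : ∀ z ∈ V, g z ∈ U := by
    intro z hz
    have := hz.2.1
    rwa [eg.coe_fst hz.1] at this
  have hegV : ∀ z ∈ V, eg z = (g z, i₀) := by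
    intro z hz
    exact Prod.ext (eg.coe_fst hz.1) hz.2.2
  have hVsec : ∀ u ∈ U, eg.toOpenPartialHomeomorph.symm (u, i₀) ∈ V := by
    intro u hu
    refine ⟨eg.toPartialEquiv.map_target (eg.mem_target.2 (hUg hu)), ?_⟩
    have : eg (eg.toOpenPartialHomeomorph.symm (u, i₀)) = (u, i₀) := eg.apply_symm_apply' (hUg hu)
    rw [mem_preimage, this]
    exact ⟨hu, rfl⟩
  have linv : ∀ z ∈ V, eg.toOpenPartialHomeomorph.symm (eg z) = z := fun z hz =>
    eg.toOpenPartialHomeomorph.left_inv hz.1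
  have hginjV : ∀ z₁ ∈ V, ∀ z₂ ∈ V, g z₁ = g z₂ → z₁ = z₂ := by
    intro z₁ h₁ z₂ h₂ hgz
    have heq : eg z₁ = eg z₂ := by rw [hegV z₁ h₁, hegV z₂ h₂, hgz]
    calc z₁ = eg.toOpenPartialHomeomorph.symm (eg z₁) := (linv z₁ h₁).symm
      _ = eg.toOpenPartialHomeomorph.symm (eg z₂) := by rw [heq]
      _ = z₂ := linv z₂ h₂
  -- monodromy: sheets of f over U map entirely into single sheets of g over U
  have hfsymm : ∀ (j : f ⁻¹' {b}), ∀ u ∈ U, f (ef.toOpenPartialHomeomorph.symm (u, j)) = u :=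
    fun j u hu => ef.proj_symm_apply' (hUf hu)
  have mono : ∀ (j : f ⁻¹' {b}), ∀ u₁ ∈ U, ∀ u₂ ∈ U,
      φ (ef.toOpenPartialHomeomorph.symm (u₁, j)) ∈ V → φ (ef.toOpenPartialHomeomorph.symm (u₂, j)) ∈ V := by
    intro j u₁ hu₁ u₂ hu₂ hφu₁
    set q : S → S'' := fun u => φ (ef.toOpenPartialHomeomorph.symm (u, j)) with hq
    have hgq : ∀ u ∈ U, g (q u) = u := fun u hu => by rw [hq]; rw [hgφ, hfsymm j u hu]
    have hqsrc : ∀ u ∈ U, q u ∈ eg.source := fun u hu =>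
      eg.mem_source.2 (by rw [hgq u hu]; exact hUg hu)
    have hqcont : ContinuousOn q U := by
      refine hφ.comp_continuousOn ?_
      refine ef.toOpenPartialHomeomorph.continuousOn_symm.comp
        ((continuous_id.prodMk continuous_const).continuousOn) ?_
      intro u hu
      exact ef.mem_target.2 (hUf hu)
    have hcont : ContinuousOn (fun u => (eg (q u)).2) U := by
      refine continuous_snd.comp_continuousOn ?_
      exact eg.toOpenPartialHomeomorph.continuousOn.comp hqcont hqsrc
    have hconst : (eg (q u₁)).2 = (eg (q u₂)).2 := hUconn.constant hcont hu₁ hu₂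
    have h1 : (eg (q u₁)).2 = i₀ := (Prod.ext_iff.mp (hegV _ hφu₁)).2
    refine ⟨hqsrc u₂ hu₂, ?_⟩
    have heq2 : eg (q u₂) = (u₂, i₀) := by
      refine Prod.ext ?_ ?_
      · rw [eg.coe_fst (hqsrc u₂ hu₂), hgq u₂ hu₂]
      · rw [← hconst, h1]
    have hmem : eg (q u₂) ∈ U ×ˢ ({i₀} : Set (g ⁻¹' {b})) := by
      rw [heq2]; exact ⟨hu₂, rfl⟩
    exact hmem
  -- a sheet of f that meets V over U maps entirely into V
  have sheet : ∀ x : S', φ x ∈ V → ∀ u ∈ U,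
      φ (ef.toOpenPartialHomeomorph.symm (u, (ef x).2)) ∈ V := by
    intro x hx u hu
    have hfxU : f x ∈ U := by rw [← hgφ x]; exact hgV _ hx
    have hxsrc : x ∈ ef.source := ef.mem_source.2 (hUf hfxU)
    have hefx : ef x = (f x, (ef x).2) := Prod.ext (ef.coe_fst hxsrc) rfl
    have hx1 : ef.toOpenPartialHomeomorph.symm (f x, (ef x).2) = x := by
      rw [← hefx]; exact ef.toOpenPartialHomeomorph.left_inv hxsrc
    exact mono _ (f x) hfxU u hu (by rw [hx1]; exact hx)
  have hxsrcV : ∀ x : S', φ x ∈ V → x ∈ ef.source := fun x hx =>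
    ef.mem_source.2 (hUf (by rw [← hgφ x]; exact hgV _ hx))
  have hsymmx : ∀ x : S', φ x ∈ V → ef.toOpenPartialHomeomorph.symm (f x, (ef x).2) = x := by
    intro x hx
    have hefx : ef x = (f x, (ef x).2) := Prod.ext (ef.coe_fst (hxsrcV x hx)) rfl
    rw [← hefx]; exact ef.toOpenPartialHomeomorph.left_inv (hxsrcV x hx)
  have hkey : ∀ x : S', φ x ∈ V → φ (ef.toOpenPartialHomeomorph.symm (b, (ef x).2)) = y := by
    intro x hx
    refine hginjV _ (sheet x hx b hbU) y hyV ?_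
    rw [hgφ, hfsymm _ b hbU]
  refine ⟨V, hVopen, hyV, ?_, ?_⟩
  · -- range claim
    rintro ⟨x, hx⟩ z hz
    refine ⟨ef.toOpenPartialHomeomorph.symm (g z, (ef x).2), ?_⟩
    refine hginjV _ (sheet x hx (g z) (hgV z hz)) z hz ?_
    rw [hgφ, hfsymm _ (g z) (hgV z hz)]
  · -- even covering
    intro x₀ hx₀
    classical
    haveI hJd : DiscreteTopology (φ ⁻¹' {y} : Set S') := by
      refine DiscreteTopology.of_subset hFfd ?_
      intro x hx
      show f x = b
      rw [← hgφ x, show φ x = y from hx]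
    have hφj : ∀ j : (φ ⁻¹' {y} : Set S'), φ j.1 = y := fun j => j.2
    have hfib : ∀ j : (φ ⁻¹' {y} : Set S'), f j.1 = b := fun j => by
      rw [← hgφ, hφj j]
    have hjsrc : ∀ j : (φ ⁻¹' {y} : Set S'), j.1 ∈ ef.source := fun j =>
      ef.mem_source.2 (by rw [hfib j]; exact hbf)
    set ι : (φ ⁻¹' {y} : Set S') → (f ⁻¹' {b} : Set S') := fun j => (ef j.1).2 with hι
    have hsymmj : ∀ j : (φ ⁻¹' {y} : Set S'),
        ef.toOpenPartialHomeomorph.symm (b, ι j) = j.1 := by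
      intro j
      have hefj : ef j.1 = (b, ι j) := Prod.ext (by rw [ef.coe_fst (hjsrc j), hfib j]) rfl
      rw [← hefj]; exact ef.toOpenPartialHomeomorph.left_inv (hjsrc j)
    set θ : (f ⁻¹' {b} : Set S') → (φ ⁻¹' {y} : Set S') := fun q =>
      if h : φ (ef.toOpenPartialHomeomorph.symm (b, q)) = y
      then ⟨ef.toOpenPartialHomeomorph.symm (b, q), h⟩ else ⟨x₀, hx₀⟩ with hθ
    have hθpos : ∀ (q : (f ⁻¹' {b} : Set S')) (h : φ (ef.toOpenPartialHomeomorph.symm (b, q)) = y),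
        (θ q : S') = ef.toOpenPartialHomeomorph.symm (b, q) := by
      intro q h
      simp only [hθ, dif_pos h]
    have hθι : ∀ j : (φ ⁻¹' {y} : Set S'), θ (ι j) = j := by
      intro j
      refine Subtype.ext ?_
      rw [hθpos _ (by rw [hsymmj j]; exact hφj j), hsymmj j]
    have hjV : ∀ j : (φ ⁻¹' {y} : Set S'), ∀ u ∈ U,
        φ (ef.toOpenPartialHomeomorph.symm (u, ι j)) ∈ V := by
      intro j u hu
      refine mono (ι j) b hbU u hu ?_
      rw [hsymmj j, hφj j]; exact hyV
    have hιθ : ∀ x : S', φ x ∈ V → ι (θ (ef x).2) = (ef x).2 := by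
      intro x hx
      have h1 : (θ (ef x).2 : S') = ef.toOpenPartialHomeomorph.symm (b, (ef x).2) :=
        hθpos _ (hkey x hx)
      show (ef (θ (ef x).2 : S')).2 = (ef x).2
      rw [h1, ef.apply_symm_apply' hbf]
    refine IsEvenlyCovered.of_trivialization (t := {
      toFun := fun x => (φ x, θ (ef x).2)
      invFun := fun zj => ef.toOpenPartialHomeomorph.symm (g zj.1, ι zj.2)
      source := φ ⁻¹' V
      target := V ×ˢ univ
      map_source' := fun x hx => ⟨hx, mem_univ _⟩
      map_target' := by
        rintro ⟨z, j⟩ ⟨hz, -⟩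
        exact hjV j (g z) (hgV z hz)
      left_inv' := by
        intro x hx
        show ef.toOpenPartialHomeomorph.symm (g (φ x), ι (θ (ef x).2)) = x
        rw [hιθ x hx, hgφ x]
        exact hsymmx x hx
      right_inv' := by
        rintro ⟨z, j⟩ ⟨hz, -⟩
        have hu : g z ∈ U := hgV z hz
        have hw : ef (ef.toOpenPartialHomeomorph.symm (g z, ι j)) = (g z, ι j) :=
          ef.apply_symm_apply' (hUf hu)
        have hφw : φ (ef.toOpenPartialHomeomorph.symm (g z, ι j)) = z := by
          refine hginjV _ (hjV j (g z) hu) z hz ?_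
          rw [hgφ, hfsymm _ (g z) hu]
        have h2 : (ef (ef.toOpenPartialHomeomorph.symm (g z, ι j))).2 = ι j := by rw [hw]
        refine Prod.ext hφw ?_
        show θ (ef (ef.toOpenPartialHomeomorph.symm (g z, ι j))).2 = j
        rw [h2]
        exact hθι j
      open_source := hVopen.preimage hφ
      open_target := hVopen.prod isOpen_univ
      continuousOn_toFun := by
        have c1 : ContinuousOn (fun x : S' => (ef x).2) (φ ⁻¹' V) :=
          continuous_snd.comp_continuousOn
            (ef.toOpenPartialHomeomorph.continuousOn.mono (fun x hx => hxsrcV x hx))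
        have c2 : ContinuousOn (fun x : S' => θ (ef x).2) (φ ⁻¹' V) :=
          (continuous_of_discreteTopology (f := θ)).comp_continuousOn c1
        exact (hφ.continuousOn).prodMk c2
      continuousOn_invFun := by
        refine ef.toOpenPartialHomeomorph.continuousOn_symm.comp ?_ ?_
        · exact ((hg.continuous.comp continuous_fst).prodMk
            ((continuous_of_discreteTopology (f := ι)).comp continuous_snd)).continuousOn
        · rintro ⟨z, j⟩ ⟨hz, -⟩
          exact ef.mem_target.2 (hUf (hgV z hz))
      baseSet := V
      open_baseSet := hVopen
      source_eq := rfl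
      target_eq := rfl
      proj_toFun := fun x _ => rfl }) hyV

/-- Let `S, S', S''` be topological spaces with `S` locally path-connected,
`S'` nonempty, and `S''` connected and locally path-connected. Let `f : S' → S` and
`g : S'' → S` be surjective covering maps, and let `φ : S' → S''` be continuous with
`g ∘ φ = f`. Then `φ` is a surjective covering map. -/
theorem covering_of_factor_through_covering
    {S S' S'' : Type*} [TopologicalSpace S] [TopologicalSpace S'] [TopologicalSpace S'']
    [LocallyPathConnectedSpace S] [Nonempty S'] [ConnectedSpace S''] [LocallyPathConnectedSpace S'']
    (f : S' → S) (g : S'' → S) (φ : S' → S'')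
    (hf : IsCoveringMap f) (hfsurj : Function.Surjective f)
    (hg : IsCoveringMap g) (hgsurj : Function.Surjective g)
    (hφ : Continuous φ) (hcomm : g ∘ φ = f) :
    IsCoveringMap φ ∧ Function.Surjective φ := by
  have key := fun y => covering_factor_key f g φ hf hfsurj hg hφ hcomm y
  have hsurj : Function.Surjective φ := by
    have hclopen : IsClopen (Set.range φ) := by
      constructor
      · refine isClosed_of_closure_subset ?_
        intro y hy
        obtain ⟨V, hVo, hyV, hrange, -⟩ := key y
        obtain ⟨z, hzV, x, hxz⟩ := mem_closure_iff.mp hy V hVo hyV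
        exact hrange ⟨x, by rw [hxz]; exact hzV⟩ hyV
      · rw [isOpen_iff_forall_mem_open]
        rintro y ⟨x, rfl⟩
        obtain ⟨V, hVo, hyV, hrange, -⟩ := key (φ x)
        exact ⟨V, hrange ⟨x, hyV⟩, hVo, hyV⟩
    rw [← Set.range_eq_univ]
    exact hclopen.eq_univ (Set.range_nonempty φ)
  refine ⟨fun y => ?_, hsurj⟩
  obtain ⟨x₀, hx₀⟩ := hsurj y
  obtain ⟨V, -, -, -, hcov⟩ := key y
  exact hcov x₀ hx₀
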